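/- arXiv:2511.00729 — 3 statements merged into one kernel-verified Lean document; each statement's English description precedes it below -/
import Mathlib

section
/- Let g ∈ SL(2,ℂ) with singular value decomposition g = U·diag(M, M⁻¹)·V where M = ‖g‖_op > 1 and U, V ∈ SU(2). Let L(g) := U e₁ ℂ and L(g⁻¹) := V⁻¹ e₂ ℂ. Then for every 0 < ε < 1 and all zℂ, wℂ ∈ ℂP¹ with d(zℂ, L(g⁻¹)) > ε and d(wℂ, L(g⁻¹)) > ε, one has d(gzℂ, gwℂ) ≤ ε⁻² ‖g‖_op⁻² d(zℂ, wℂ), and moreover d(L(g), gzℂ) ≤ ε⁻¹ ‖g‖_op⁻². -/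
noncomputable section

/-- `ℂ²` with the standard Hermitian norm. -/
abbrev C2 := EuclideanSpace ℂ (Fin 2)

/-- The distance between the lines spanned by `z` and `w`, computed on representatives:
`d(zℂ, wℂ) = |z₁w₂ - z₂w₁| / (‖z‖‖w‖)`. -/
def dCP (z w : C2) : ℝ := ‖z 0 * w 1 - z 1 * w 0‖ / (‖z‖ * ‖w‖)

/-- First standard basis vector of `ℂ²`. -/
def e1 : C2 := WithLp.toLp 2 ![1, 0]

/-- Second standard basis vector of `ℂ²`. -/
def e2 : C2 := WithLp.toLp 2 ![0, 1]

/-- The operator norm of a `2×2` complex matrix acting on `ℂ²` with the Hermitian norm. -/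
def opn (A : Matrix (Fin 2) (Fin 2) ℂ) : ℝ := ‖Matrix.toEuclideanCLM (𝕜 := ℂ) A‖

/-- The action of a matrix on a vector of `ℂ²`. -/
def mulVecE (A : Matrix (Fin 2) (Fin 2) ℂ) (z : C2) : C2 := Matrix.toEuclideanCLM (𝕜 := ℂ) A z

lemma mulVecE_apply (A : Matrix (Fin 2) (Fin 2) ℂ) (z : C2) (i : Fin 2) :
    mulVecE A z i = A i 0 * z 0 + A i 1 * z 1 := by
  show (Matrix.toLin' A) z i = _
  simp [Matrix.toLin'_apply, Matrix.mulVec, dotProduct, Fin.sum_univ_two]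

lemma mulVecE_mul (A B : Matrix (Fin 2) (Fin 2) ℂ) (z : C2) :
    mulVecE (A * B) z = mulVecE A (mulVecE B z) := by
  simp [mulVecE, map_mul]

lemma mulVecE_one (z : C2) : mulVecE 1 z = z := by
  simp [mulVecE, map_one]

lemma norm_mulVecE_unitary {W : Matrix (Fin 2) (Fin 2) ℂ}
    (hW : W ∈ Matrix.unitaryGroup (Fin 2) ℂ) (z : C2) : ‖mulVecE W z‖ = ‖z‖ := by
  have h : Matrix.toEuclideanCLM (𝕜 := ℂ) W ∈ unitary (C2 →L[ℂ] C2) := by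
    refine ⟨?_, ?_⟩
    · rw [← map_star, ← map_mul, hW.1, map_one]
    · rw [← map_star, ← map_mul, hW.2, map_one]
  exact ContinuousLinearMap.norm_map_of_mem_unitary h z

lemma abs_apply_le_norm (v : C2) (i : Fin 2) : ‖v i‖ ≤ ‖v‖ := by
  rw [EuclideanSpace.norm_eq]
  have h1 : ‖v i‖ = Real.sqrt (‖v i‖ ^ 2) := by
    rw [Real.sqrt_sq (norm_nonneg _)]
  rw [h1]
  apply Real.sqrt_le_sqrt
  exact Finset.single_le_sum (fun j _ => sq_nonneg ‖v j‖) (Finset.mem_univ i)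

lemma dCP_unitary {W : Matrix (Fin 2) (Fin 2) ℂ}
    (hW : W ∈ Matrix.specialUnitaryGroup (Fin 2) ℂ) (z w : C2) :
    dCP (mulVecE W z) (mulVecE W w) = dCP z w := by
  obtain ⟨hWu, hWd⟩ := Matrix.mem_specialUnitaryGroup_iff.mp hW
  have hnum : (mulVecE W z 0) * (mulVecE W w 1) - (mulVecE W z 1) * (mulVecE W w 0)
      = W.det * (z 0 * w 1 - z 1 * w 0) := by
    simp only [mulVecE_apply, Matrix.det_fin_two]; ring
  unfold dCP
  rw [hnum, hWd, one_mul, norm_mulVecE_unitary hWu, norm_mulVecE_unitary hWu]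

/-- Contraction estimate away from the repelling direction: if g = U·diag(M,M⁻¹)·V with
M = ‖g‖_op > 1 and U,V ∈ SU(2), then for 0 < ε < 1 and lines zℂ, wℂ at distance > ε from
L(g⁻¹) = V⁻¹e₂ℂ we have d(gzℂ,gwℂ) ≤ ε⁻²‖g‖⁻²d(zℂ,wℂ) and d(L(g), gzℂ) ≤ ε⁻¹‖g‖⁻²,
where L(g) = Ue₁ℂ. -/
theorem stmt_3 (g : Matrix.SpecialLinearGroup (Fin 2) ℂ)
    (U V : Matrix (Fin 2) (Fin 2) ℂ)
    (hU : U ∈ Matrix.specialUnitaryGroup (Fin 2) ℂ)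
    (hV : V ∈ Matrix.specialUnitaryGroup (Fin 2) ℂ)
    (hM : 1 < opn (↑g))
    (hg : (↑g : Matrix (Fin 2) (Fin 2) ℂ) =
      U * Matrix.diagonal ![((opn (↑g) : ℝ) : ℂ), (((opn (↑g))⁻¹ : ℝ) : ℂ)] * V)
    (ε : ℝ) (hε0 : 0 < ε) (hε1 : ε < 1)
    (z w : C2) (hz : z ≠ 0) (hw : w ≠ 0)
    (hzY : ε < dCP z (mulVecE V⁻¹ e2)) (hwY : ε < dCP w (mulVecE V⁻¹ e2)) :
    dCP (mulVecE (↑g) z) (mulVecE (↑g) w) ≤ ε⁻¹ ^ 2 * ((opn (↑g)) ^ 2)⁻¹ * dCP z w ∧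
    dCP (mulVecE U e1) (mulVecE (↑g) z) ≤ ε⁻¹ * ((opn (↑g)) ^ 2)⁻¹ := by
  set M := opn (↑g : Matrix (Fin 2) (Fin 2) ℂ) with hMdef
  have hM0 : (0:ℝ) < M := lt_trans one_pos hM
  set D : Matrix (Fin 2) (Fin 2) ℂ := Matrix.diagonal ![((M : ℝ) : ℂ), ((M⁻¹ : ℝ) : ℂ)] with hD
  obtain ⟨hVu, hVd⟩ := Matrix.mem_specialUnitaryGroup_iff.mp hV
  have hVinv : V * V⁻¹ = 1 := Matrix.mul_nonsing_inv V (by rw [hVd]; exact isUnit_one)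
  set z' := mulVecE V z with hz'def
  set w' := mulVecE V w with hw'def
  have hVe : mulVecE V (mulVecE V⁻¹ e2) = e2 := by rw [← mulVecE_mul, hVinv, mulVecE_one]
  have hne2 : ‖e2‖ = 1 := by
    rw [EuclideanSpace.norm_eq]; simp [e2, Fin.sum_univ_two]
  have he20 : e2 0 = 0 := rfl
  have he21 : e2 1 = 1 := rfl
  have hdCPe2 : ∀ v : C2, dCP v e2 = ‖v 0‖ / ‖v‖ := by
    intro v
    unfold dCP
    rw [he20, he21, hne2, mul_one, mul_zero, mul_one, sub_zero]
  have hzd : dCP z (mulVecE V⁻¹ e2) = ‖z' 0‖ / ‖z'‖ := by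
    rw [← dCP_unitary hV z _, hVe, hdCPe2]
  have hwd : dCP w (mulVecE V⁻¹ e2) = ‖w' 0‖ / ‖w'‖ := by
    rw [← dCP_unitary hV w _, hVe, hdCPe2]
  have hz'norm : 0 < ‖z'‖ := by
    rcases eq_or_lt_of_le (norm_nonneg z') with h | h
    · exfalso; rw [hzd, ← h, div_zero] at hzY
      exact absurd hzY (not_lt.mpr hε0.le)
    · exact h
  have hw'norm : 0 < ‖w'‖ := by
    rcases eq_or_lt_of_le (norm_nonneg w') with h | h
    · exfalso; rw [hwd, ← h, div_zero] at hwY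
      exact absurd hwY (not_lt.mpr hε0.le)
    · exact h
  have hz'0 : ε * ‖z'‖ < ‖z' 0‖ := by
    rw [hzd] at hzY; exact (lt_div_iff₀ hz'norm).mp hzY
  have hw'0 : ε * ‖w'‖ < ‖w' 0‖ := by
    rw [hwd] at hwY; exact (lt_div_iff₀ hw'norm).mp hwY
  have hD00 : D 0 0 = ((M:ℝ):ℂ) := by simp [hD]
  have hD01 : D 0 1 = 0 := by simp [hD]
  have hD10 : D 1 0 = 0 := by simp [hD]
  have hD11 : D 1 1 = ((M⁻¹:ℝ):ℂ) := by simp [hD]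
  have hDv0 : ∀ v : C2, mulVecE D v 0 = ((M:ℝ):ℂ) * v 0 := by
    intro v; rw [mulVecE_apply, hD00, hD01]; ring
  have hDv1 : ∀ v : C2, mulVecE D v 1 = ((M⁻¹:ℝ):ℂ) * v 1 := by
    intro v; rw [mulVecE_apply, hD10, hD11]; ring
  have hgz : ∀ v : C2, mulVecE (↑g) v = mulVecE U (mulVecE D (mulVecE V v)) := by
    intro v; rw [hg, mulVecE_mul, mulVecE_mul]
  have hMC : ((M:ℝ):ℂ) ≠ 0 := by exact_mod_cast hM0.ne'
  have hDnorm : ∀ v : C2, M * ‖v 0‖ ≤ ‖mulVecE D v‖ := by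
    intro v
    have h := abs_apply_le_norm (mulVecE D v) 0
    rw [hDv0, norm_mul, Complex.norm_of_nonneg hM0.le] at h
    exact h
  have hb1 : M * (ε * ‖z'‖) < ‖mulVecE D z'‖ :=
    lt_of_lt_of_le (mul_lt_mul_of_pos_left hz'0 hM0) (hDnorm z')
  have hb2 : M * (ε * ‖w'‖) < ‖mulVecE D w'‖ :=
    lt_of_lt_of_le (mul_lt_mul_of_pos_left hw'0 hM0) (hDnorm w')
  have hMM : ((M:ℝ):ℂ) * ((M⁻¹:ℝ):ℂ) = 1 := by
    push_cast; exact mul_inv_cancel₀ hMC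
  constructor
  · rw [hgz, hgz, dCP_unitary hU, ← dCP_unitary hV z w, ← hz'def, ← hw'def]
    unfold dCP
    have hnum : (mulVecE D z' 0) * (mulVecE D w' 1) - (mulVecE D z' 1) * (mulVecE D w' 0)
        = z' 0 * w' 1 - z' 1 * w' 0 := by
      rw [hDv0, hDv1, hDv1, hDv0]
      calc ((M:ℝ):ℂ) * z' 0 * (((M⁻¹:ℝ):ℂ) * w' 1) - ((M⁻¹:ℝ):ℂ) * z' 1 * (((M:ℝ):ℂ) * w' 0)
          = ((M:ℝ):ℂ) * ((M⁻¹:ℝ):ℂ) * (z' 0 * w' 1) - ((M:ℝ):ℂ) * ((M⁻¹:ℝ):ℂ) * (z' 1 * w' 0) := by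
            ring
        _ = z' 0 * w' 1 - z' 1 * w' 0 := by rw [hMM]; ring
    rw [hnum]
    set N := ‖z' 0 * w' 1 - z' 1 * w' 0‖ with hN
    have hN0 : 0 ≤ N := norm_nonneg _
    have hdpos : 0 < (M * (ε * ‖z'‖)) * (M * (ε * ‖w'‖)) := by positivity
    have hdle : (M * (ε * ‖z'‖)) * (M * (ε * ‖w'‖)) ≤ ‖mulVecE D z'‖ * ‖mulVecE D w'‖ :=
      mul_le_mul hb1.le hb2.le (by positivity) (norm_nonneg _)
    calc N / (‖mulVecE D z'‖ * ‖mulVecE D w'‖)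
        ≤ N / ((M * (ε * ‖z'‖)) * (M * (ε * ‖w'‖))) := by
          apply div_le_div_of_nonneg_left hN0 hdpos hdle
      _ = ε⁻¹ ^ 2 * (M ^ 2)⁻¹ * (N / (‖z'‖ * ‖w'‖)) := by
          rw [div_eq_mul_inv, div_eq_mul_inv]; ring
  · rw [hgz, dCP_unitary hU]
    have hne1 : ‖e1‖ = 1 := by
      rw [EuclideanSpace.norm_eq]; simp [e1, Fin.sum_univ_two]
    have he10 : e1 0 = 1 := rfl
    have he11 : e1 1 = 0 := rfl
    unfold dCP
    rw [he10, he11, hne1, one_mul, zero_mul, sub_zero, one_mul, hDv1, norm_mul,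
      Complex.norm_of_nonneg (inv_pos.mpr hM0).le]
    calc M⁻¹ * ‖z' 1‖ / ‖mulVecE D z'‖
        ≤ M⁻¹ * ‖z'‖ / (M * (ε * ‖z'‖)) := by
          apply div_le_div₀ (by positivity)
            (mul_le_mul_of_nonneg_left (abs_apply_le_norm z' 1) (by positivity))
            (by positivity) hb1.le
      _ = ε⁻¹ * (M ^ 2)⁻¹ := by
          have h1 : ‖z'‖ ≠ 0 := hz'norm.ne'
          have h2 : ε ≠ 0 := hε0.ne'
          have h3 : M ≠ 0 := hM0.ne'
          field_simp
end
end

section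
/- Let ψ : ℂP¹ → ℂ ∪ {∞} be defined by ψ(zℂ) = z₁/z₂ if z₂ ≠ 0 and ψ(zℂ) = ∞ if z₂ = 0, for (z₁,z₂) = z ∈ ℂ² \ {0}. Then for every R > 0: (i) ψ⁻¹({z ∈ ℂ : |z| < R}) = ℂP¹ \ B(e₁ℂ, (1+R²)^{-1/2}); (ii) for all z, z' ∈ ℂ with |z|, |z'| < R, (1+R²)⁻¹ |z - z'| ≤ d(ψ⁻¹(z), ψ⁻¹(z')) ≤ |z - z'|; (iii) consequently, for all wℂ, w'ℂ ∈ ℂP¹ \ B(e₁ℂ, 1/R), d(wℂ, w'ℂ) ≤ |ψ(wℂ) - ψ(w'ℂ)| ≤ (1+R²) d(wℂ, w'ℂ). -/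
noncomputable section

lemma normC2 (w : C2) : ‖w‖ = Real.sqrt (‖w 0‖ ^ 2 + ‖w 1‖ ^ 2) := by
  rw [EuclideanSpace.norm_eq, Fin.sum_univ_two]

lemma dCP_e1 (w : C2) : dCP w e1 = ‖w 1‖ / ‖w‖ := by
  have h1 : ‖e1‖ = 1 := by rw [normC2]; simp [e1]
  unfold dCP
  rw [h1, show e1 1 = 0 from rfl, show e1 0 = 1 from rfl]
  simp

lemma norm_eq' (w : C2) (h : w 1 ≠ 0) :
    ‖w‖ = ‖w 1‖ * Real.sqrt (‖w 0 / w 1‖ ^ 2 + 1) := by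
  have h1 : 0 < ‖w 1‖ := norm_pos_iff.mpr h
  rw [normC2, norm_div, div_pow]
  rw [show ‖w 0‖ ^ 2 / ‖w 1‖ ^ 2 + 1
      = (‖w 0‖ ^ 2 + ‖w 1‖ ^ 2) / ‖w 1‖ ^ 2 by
    field_simp]
  rw [Real.sqrt_div (by positivity), Real.sqrt_sq h1.le]
  field_simp

lemma dCP_e1_eq (w : C2) (h : w 1 ≠ 0) :
    dCP w e1 = (Real.sqrt (‖w 0 / w 1‖ ^ 2 + 1))⁻¹ := by
  have h1 : 0 < ‖w 1‖ := norm_pos_iff.mpr h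
  rw [dCP_e1, norm_eq' w h]
  have : (0:ℝ) < Real.sqrt (‖w 0 / w 1‖ ^ 2 + 1) := by positivity
  field_simp

lemma part1 (R : ℝ) (hR : 0 < R) (w : C2) (hw : w ≠ 0) :
    (w 1 ≠ 0 ∧ ‖w 0 / w 1‖ < R) ↔ (Real.sqrt (1 + R ^ 2))⁻¹ < dCP w e1 := by
  have hsR : (0:ℝ) < Real.sqrt (1 + R ^ 2) := by positivity
  constructor
  · rintro ⟨h1, h2⟩
    rw [dCP_e1_eq w h1]
    have ht : (0:ℝ) ≤ ‖w 0 / w 1‖ := (norm_nonneg _)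
    apply inv_strictAnti₀ (by positivity)
    apply Real.sqrt_lt_sqrt (by positivity)
    nlinarith
  · intro hlt
    have h1 : w 1 ≠ 0 := by
      intro h0
      rw [dCP_e1, h0] at hlt
      simp at hlt
      have := inv_pos.mpr hsR
      linarith
    refine ⟨h1, ?_⟩
    rw [dCP_e1_eq w h1] at hlt
    have ht : (0:ℝ) ≤ ‖w 0 / w 1‖ := norm_nonneg _
    have hu : (0:ℝ) < Real.sqrt (‖w 0 / w 1‖ ^ 2 + 1) := by positivity
    have h2 : Real.sqrt (‖w 0 / w 1‖ ^ 2 + 1) < Real.sqrt (1 + R ^ 2) :=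
      (inv_lt_inv₀ hsR hu).mp hlt
    have h3 : ‖w 0 / w 1‖ ^ 2 + 1 < 1 + R ^ 2 :=
      (Real.sqrt_lt_sqrt_iff (by positivity)).mp h2
    nlinarith

lemma dCP_vec (z z' : ℂ) : dCP (WithLp.toLp 2 ![z, 1]) (WithLp.toLp 2 ![z', 1]) =
    ‖z - z'‖ /
      (Real.sqrt (‖z‖ ^ 2 + 1) * Real.sqrt (‖z'‖ ^ 2 + 1)) := by
  unfold dCP
  rw [normC2, normC2]
  norm_num

lemma part2 (R : ℝ) (hR : 0 < R) (z z' : ℂ) (hz : ‖z‖ < R)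
    (hz' : ‖z'‖ < R) :
    (1 + R ^ 2)⁻¹ * ‖z - z'‖ ≤ dCP (WithLp.toLp 2 ![z, 1]) (WithLp.toLp 2 ![z', 1]) ∧
    dCP (WithLp.toLp 2 ![z, 1]) (WithLp.toLp 2 ![z', 1]) ≤ ‖z - z'‖ := by
  rw [dCP_vec]
  set u := Real.sqrt (‖z‖ ^ 2 + 1) with hu
  set v := Real.sqrt (‖z'‖ ^ 2 + 1) with hv
  have hu1 : 1 ≤ u := Real.one_le_sqrt.mpr (by nlinarith [sq_nonneg (‖z‖)])
  have hv1 : 1 ≤ v := Real.one_le_sqrt.mpr (by nlinarith [sq_nonneg (‖z'‖)])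
  have huR : u ≤ Real.sqrt (R ^ 2 + 1) := Real.sqrt_le_sqrt (by nlinarith [norm_nonneg z])
  have hvR : v ≤ Real.sqrt (R ^ 2 + 1) := Real.sqrt_le_sqrt (by nlinarith [norm_nonneg z'])
  have hsq : Real.sqrt (R ^ 2 + 1) * Real.sqrt (R ^ 2 + 1) = R ^ 2 + 1 :=
    Real.mul_self_sqrt (by positivity)
  have huv : u * v ≤ 1 + R ^ 2 := by
    calc u * v ≤ Real.sqrt (R ^ 2 + 1) * Real.sqrt (R ^ 2 + 1) := by
          apply mul_le_mul huR hvR (by linarith) (Real.sqrt_nonneg _)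
      _ = 1 + R ^ 2 := by rw [hsq]; ring
  have hpos : (0:ℝ) < u * v := by nlinarith
  constructor
  · rw [inv_mul_eq_div]
    gcongr
  · exact div_le_self (norm_nonneg _) (by nlinarith)

lemma dCP_eq_chart (w w' : C2) (h : w 1 ≠ 0) (h' : w' 1 ≠ 0) :
    dCP w w' = dCP (WithLp.toLp 2 ![w 0 / w 1, 1]) (WithLp.toLp 2 ![w' 0 / w' 1, 1]) := by
  rw [dCP_vec]
  unfold dCP
  rw [norm_eq' w h, norm_eq' w' h']
  have key : w 0 * w' 1 - w 1 * w' 0 = (w 1 * w' 1) * (w 0 / w 1 - w' 0 / w' 1) := by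
    field_simp
  rw [key, norm_mul, norm_mul]
  have h1 : 0 < ‖w 1‖ := norm_pos_iff.mpr h
  have h1' : 0 < ‖w' 1‖ := norm_pos_iff.mpr h'
  have hs : (0:ℝ) < Real.sqrt (‖w 0 / w 1‖ ^ 2 + 1) := by positivity
  have hs' : (0:ℝ) < Real.sqrt (‖w' 0 / w' 1‖ ^ 2 + 1) := by positivity
  field_simp

/-- Properties of the chart ψ(zℂ) = z₁/z₂ relating the metric on ℂP¹ to the Euclidean
metric on ℂ: (i) ψ⁻¹{|z| < R} is the complement of the closed ball B(e₁ℂ, (1+R²)^(-1/2));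
(ii) ψ⁻¹ is bi-Lipschitz on {|z| < R} with constants 1 and (1+R²)⁻¹;
(iii) ψ is bi-Lipschitz outside B(e₁ℂ, 1/R) with constants 1 and (1+R²). -/
theorem stmt_4 (R : ℝ) (hR : 0 < R) :
    (∀ w : C2, w ≠ 0 →
      ((w 1 ≠ 0 ∧ ‖w 0 / w 1‖ < R) ↔ (Real.sqrt (1 + R ^ 2))⁻¹ < dCP w e1)) ∧
    (∀ z z' : ℂ, ‖z‖ < R → ‖z'‖ < R →
      (1 + R ^ 2)⁻¹ * ‖z - z'‖ ≤ dCP (WithLp.toLp 2 ![z, 1]) (WithLp.toLp 2 ![z', 1]) ∧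
      dCP (WithLp.toLp 2 ![z, 1]) (WithLp.toLp 2 ![z', 1]) ≤ ‖z - z'‖) ∧
    (∀ w w' : C2, w ≠ 0 → w' ≠ 0 → 1 / R < dCP w e1 → 1 / R < dCP w' e1 →
      dCP w w' ≤ ‖w 0 / w 1 - w' 0 / w' 1‖ ∧
      ‖w 0 / w 1 - w' 0 / w' 1‖ ≤ (1 + R ^ 2) * dCP w w') := by
  refine ⟨part1 R hR, part2 R hR, ?_⟩
  intro w w' hw hw' hdw hdw'
  have hRs : R < Real.sqrt (1 + R ^ 2) := by
    rw [Real.lt_sqrt hR.le]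
    linarith
  have hinv : (Real.sqrt (1 + R ^ 2))⁻¹ < 1 / R := by
    rw [one_div]
    exact inv_strictAnti₀ hR hRs
  obtain ⟨h1, hlt⟩ := (part1 R hR w hw).mpr (lt_trans hinv hdw)
  obtain ⟨h1', hlt'⟩ := (part1 R hR w' hw').mpr (lt_trans hinv hdw')
  rw [dCP_eq_chart w w' h1 h1']
  obtain ⟨ha, hb⟩ := part2 R hR _ _ hlt hlt'
  refine ⟨hb, ?_⟩
  exact (inv_mul_le_iff₀ (by positivity)).mp ha
end
end

section
/- There exists a constant R > 1 such that for all g₁, g₂ ∈ SL(2,ℂ) satisfying (1/2) ≤ ‖g₁‖_op / ‖g₂‖_op ≤ 2 and d(L(g₁), L(g₂)) ≤ ‖g₁‖_op⁻², one has d_G(g₁, g₂) ≤ R, where d_G is the left-invariant Riemannian distance on SL(2,ℂ). More concretely, under these hypotheses the matrix g₂⁻¹ g₁ satisfies ‖g₂⁻¹ g₁‖_op ≤ √5 + √8. -/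
noncomputable section

/-- `ReprL g L` says that the nonzero vector `L` represents the attracting direction
`L(g)` of `g`: either ‖g‖_op = 1 and L = e₁, or ‖g‖_op > 1 and L = Ue₁ for a singular
value decomposition g = U·diag(‖g‖_op, ‖g‖_op⁻¹)·V with U, V ∈ SU(2). -/
def ReprL (g : Matrix.SpecialLinearGroup (Fin 2) ℂ) (L : C2) : Prop :=
  (opn (↑g) = 1 ∧ L = e1) ∨
  (1 < opn (↑g) ∧ ∃ U V : Matrix (Fin 2) (Fin 2) ℂ,
    U ∈ Matrix.specialUnitaryGroup (Fin 2) ℂ ∧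
    V ∈ Matrix.specialUnitaryGroup (Fin 2) ℂ ∧
    (↑g : Matrix (Fin 2) (Fin 2) ℂ) =
      U * Matrix.diagonal ![((opn (↑g) : ℝ) : ℂ), (((opn (↑g))⁻¹ : ℝ) : ℂ)] * V ∧
    L = mulVecE U e1)

namespace Stmt7Aux

abbrev M2 := Matrix (Fin 2) (Fin 2) ℂ

lemma opn_nonneg (A : M2) : 0 ≤ opn A := norm_nonneg _

lemma opn_mul_le (A B : M2) : opn (A * B) ≤ opn A * opn B := by
  unfold opn; rw [map_mul]; exact norm_mul_le _ _

lemma clm_apply (A : M2) (x : C2) (i : Fin 2) :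
    (Matrix.toEuclideanCLM (𝕜 := ℂ) A x) i = A i 0 * x 0 + A i 1 * x 1 := by
  have : (Matrix.toEuclideanCLM (𝕜 := ℂ) A x) i = (A.mulVec fun j => x j) i := rfl
  rw [this, Matrix.mulVec, dotProduct, Fin.sum_univ_two]

lemma norm_e1 : ‖e1‖ = 1 := by
  rw [EuclideanSpace.norm_eq, Fin.sum_univ_two]; norm_num [e1]

lemma opn_le_frob (A : M2) :
    opn A ≤ Real.sqrt (‖A 0 0‖^2 + ‖A 0 1‖^2 + ‖A 1 0‖^2 + ‖A 1 1‖^2) := by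
  apply ContinuousLinearMap.opNorm_le_bound _ (Real.sqrt_nonneg _)
  intro x
  rw [EuclideanSpace.norm_eq, Fin.sum_univ_two, EuclideanSpace.norm_eq, Fin.sum_univ_two]
  rw [clm_apply, clm_apply]
  rw [← Real.sqrt_mul (by positivity)]
  apply Real.sqrt_le_sqrt
  have h1 : ‖A 0 0 * x 0 + A 0 1 * x 1‖ ≤ ‖A 0 0‖*‖x 0‖ + ‖A 0 1‖*‖x 1‖ := by
    refine (norm_add_le _ _).trans ?_; simp [norm_mul]
  have h2 : ‖A 1 0 * x 0 + A 1 1 * x 1‖ ≤ ‖A 1 0‖*‖x 0‖ + ‖A 1 1‖*‖x 1‖ := by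
    refine (norm_add_le _ _).trans ?_; simp [norm_mul]
  have e1 : ‖A 0 0 * x 0 + A 0 1 * x 1‖^2 ≤ (‖A 0 0‖*‖x 0‖ + ‖A 0 1‖*‖x 1‖)^2 :=
    pow_le_pow_left₀ (norm_nonneg _) h1 2
  have e2 : ‖A 1 0 * x 0 + A 1 1 * x 1‖^2 ≤ (‖A 1 0‖*‖x 0‖ + ‖A 1 1‖*‖x 1‖)^2 :=
    pow_le_pow_left₀ (norm_nonneg _) h2 2
  nlinarith [sq_nonneg (‖A 0 0‖*‖x 1‖ - ‖A 0 1‖*‖x 0‖), sq_nonneg (‖A 1 0‖*‖x 1‖ - ‖A 1 1‖*‖x 0‖),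
    norm_nonneg (x 0), norm_nonneg (x 1), norm_nonneg (A 0 0), norm_nonneg (A 0 1),
    norm_nonneg (A 1 0), norm_nonneg (A 1 1)]

lemma col_le_opn (A : M2) (j : Fin 2) :
    ‖A 0 j‖^2 + ‖A 1 j‖^2 ≤ opn A ^ 2 := by
  set e : C2 := if j = 0 then e1 else e2 with he
  have hne : ‖e‖ = 1 := by
    rcases (by omega : j = 0 ∨ j = 1) with h | h
    · simp [he, h, norm_e1]
    · simp only [he, h]
      rw [if_neg (by norm_num), EuclideanSpace.norm_eq, Fin.sum_univ_two]; norm_num [e2]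
  have happ : ∀ i, (Matrix.toEuclideanCLM (𝕜 := ℂ) A e) i = A i j := by
    intro i
    rcases (by omega : j = 0 ∨ j = 1) with h | h <;>
      simp [he, h, clm_apply, e1, e2] <;> fin_cases i <;> rfl
  have hn : ‖Matrix.toEuclideanCLM (𝕜 := ℂ) A e‖ ≤ opn A := by
    calc ‖Matrix.toEuclideanCLM (𝕜 := ℂ) A e‖ ≤ opn A * ‖e‖ :=
      (Matrix.toEuclideanCLM (𝕜 := ℂ) A).le_opNorm e
    _ = opn A := by rw [hne, mul_one]
  have hkey : ‖Matrix.toEuclideanCLM (𝕜 := ℂ) A e‖^2 = ‖A 0 j‖^2 + ‖A 1 j‖^2 := by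
    rw [EuclideanSpace.norm_eq, Fin.sum_univ_two, happ 0, happ 1,
      Real.sq_sqrt (by positivity)]
  rw [← hkey]
  exact pow_le_pow_left₀ (norm_nonneg _) hn 2

lemma entry_le_opn (A : M2) (i j : Fin 2) : ‖A i j‖ ≤ opn A := by
  have h := col_le_opn A j
  have h2 : ‖A i j‖^2 ≤ opn A ^2 := by
    rcases (by omega : i = 0 ∨ i = 1) with h' | h' <;> subst h' <;>
      nlinarith [norm_nonneg (A 0 j), norm_nonneg (A 1 j)]
  exact (pow_le_pow_iff_left₀ (norm_nonneg _) (opn_nonneg _) (by norm_num)).mp h2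

lemma clm_mem_unitary {U : M2} (hU : U ∈ Matrix.unitaryGroup (Fin 2) ℂ) :
    Matrix.toEuclideanCLM (𝕜 := ℂ) U ∈ unitary (C2 →L[ℂ] C2) := by
  rw [Unitary.mem_iff]
  constructor
  · rw [← map_star, ← map_mul, Unitary.star_mul_self_of_mem hU, map_one]
  · rw [← map_star, ← map_mul, Unitary.mul_star_self_of_mem hU, map_one]

lemma opn_unitary_mul {U : M2} (hU : U ∈ Matrix.unitaryGroup (Fin 2) ℂ)
    (A : M2) : opn (U * A) = opn A := by
  unfold opn; rw [map_mul]
  exact CStarRing.norm_mem_unitary_mul _ (clm_mem_unitary hU)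

lemma opn_mul_unitary {U : M2} (hU : U ∈ Matrix.unitaryGroup (Fin 2) ℂ)
    (A : M2) : opn (A * U) = opn A := by
  unfold opn; rw [map_mul]
  exact CStarRing.norm_mul_mem_unitary _ (clm_mem_unitary hU)

lemma norm_clm_unitary_apply {U : M2} (hU : U ∈ Matrix.unitaryGroup (Fin 2) ℂ) (x : C2) :
    ‖Matrix.toEuclideanCLM (𝕜 := ℂ) U x‖ = ‖x‖ := by
  have hop : opn U = 1 := CStarRing.norm_of_mem_unitary (clm_mem_unitary hU)
  have hops : opn (star U) = 1 :=
    CStarRing.norm_of_mem_unitary (clm_mem_unitary (Unitary.star_mem hU))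
  apply le_antisymm
  · calc ‖Matrix.toEuclideanCLM (𝕜 := ℂ) U x‖ ≤ opn U * ‖x‖ :=
      (Matrix.toEuclideanCLM (𝕜 := ℂ) U).le_opNorm x
    _ = ‖x‖ := by rw [hop, one_mul]
  · have hx : Matrix.toEuclideanCLM (𝕜 := ℂ) (star U)
        (Matrix.toEuclideanCLM (𝕜 := ℂ) U x) = x := by
      calc Matrix.toEuclideanCLM (𝕜 := ℂ) (star U) (Matrix.toEuclideanCLM (𝕜 := ℂ) U x)
          = (Matrix.toEuclideanCLM (𝕜 := ℂ) (star U) * Matrix.toEuclideanCLM (𝕜 := ℂ) U) x :=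
            (ContinuousLinearMap.mul_apply _ _ _).symm
      _ = Matrix.toEuclideanCLM (𝕜 := ℂ) (star U * U) x := by rw [← map_mul]
      _ = x := by rw [Unitary.star_mul_self_of_mem hU, map_one, ContinuousLinearMap.one_apply]
    have h1 : ‖Matrix.toEuclideanCLM (𝕜 := ℂ) (star U) (Matrix.toEuclideanCLM (𝕜 := ℂ) U x)‖ ≤
        opn (star U) * ‖Matrix.toEuclideanCLM (𝕜 := ℂ) U x‖ :=
      (Matrix.toEuclideanCLM (𝕜 := ℂ) (star U)).le_opNorm _
    rw [hx, hops, one_mul] at h1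
    exact h1

lemma opn_adjugate_le (A : M2) : opn (Matrix.adjugate A) ≤ Real.sqrt 2 * opn A := by
  rw [Matrix.adjugate_fin_two]
  refine (opn_le_frob _).trans ?_
  have hent : ∀ x y z w : ℂ, (Matrix.of ![![x, y], ![z, w]]) 0 0 = x ∧
      (Matrix.of ![![x, y], ![z, w]]) 0 1 = y ∧ (Matrix.of ![![x, y], ![z, w]]) 1 0 = z ∧
      (Matrix.of ![![x, y], ![z, w]]) 1 1 = w := by intro x y z w; refine ⟨rfl, rfl, rfl, rfl⟩
  simp only [Matrix.cons_val', Matrix.cons_val_zero, Matrix.empty_val',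
    Matrix.cons_val_fin_one, Matrix.cons_val_one, Matrix.head_cons,
    Matrix.of_apply, norm_neg, Matrix.head_fin_const, Matrix.vecHead]
  have h0 := col_le_opn A 0
  have h1 := col_le_opn A 1
  have : Real.sqrt 2 * opn A = Real.sqrt (2 * opn A ^ 2) := by
    rw [Real.sqrt_mul (by norm_num), Real.sqrt_sq (opn_nonneg A)]
  rw [this]
  apply Real.sqrt_le_sqrt
  nlinarith [opn_nonneg A]

lemma sqrt13_le : Real.sqrt 13 ≤ Real.sqrt 5 + Real.sqrt 8 := by
  have h5 := Real.sq_sqrt (by norm_num : (5:ℝ) ≥ 0)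
  have h8 := Real.sq_sqrt (by norm_num : (8:ℝ) ≥ 0)
  have h5n := Real.sqrt_nonneg (5:ℝ)
  have h8n := Real.sqrt_nonneg (8:ℝ)
  rw [show Real.sqrt 5 + Real.sqrt 8 = Real.sqrt ((Real.sqrt 5 + Real.sqrt 8)^2) by
    rw [Real.sqrt_sq (by positivity)]]
  apply Real.sqrt_le_sqrt
  nlinarith [mul_nonneg h5n h8n]

lemma diag_inv (σ : ℝ) (hσ : 0 < σ) :
    (Matrix.diagonal ![((σ:ℝ):ℂ), ((σ⁻¹:ℝ):ℂ)])⁻¹ =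
      Matrix.diagonal ![((σ⁻¹:ℝ):ℂ), ((σ:ℝ):ℂ)] := by
  apply Matrix.inv_eq_right_inv
  have h1 : ((σ:ℝ):ℂ) ≠ 0 := by exact_mod_cast hσ.ne'
  ext i j
  fin_cases i <;> fin_cases j <;>
    simp [Matrix.mul_apply, Fin.sum_univ_two, Matrix.diagonal, Matrix.one_apply] <;>
    field_simp

lemma numeric (σ₁ σ₂ a b c d : ℝ) (hσ₁ : 1 ≤ σ₁) (hσ₂ : 1 ≤ σ₂)
    (h12 : σ₁ ≤ 2*σ₂) (h21 : σ₂ ≤ 2*σ₁)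
    (ha0 : 0 ≤ a) (ha : a ≤ 1) (hb0 : 0 ≤ b) (hb : b ≤ 1)
    (hc0 : 0 ≤ c) (hc : c ≤ (σ₁^2)⁻¹) (hd0 : 0 ≤ d) (hd : d ≤ 1) :
    (σ₂⁻¹ * a * σ₁)^2 + (σ₂⁻¹ * b * σ₁⁻¹)^2 + (σ₂ * c * σ₁)^2 + (σ₂ * d * σ₁⁻¹)^2 ≤ 13 := by
  have hσ₁0 : (0:ℝ) < σ₁ := by linarith
  have hσ₂0 : (0:ℝ) < σ₂ := by linarith
  have hi1 : 0 < σ₁⁻¹ := inv_pos.mpr hσ₁0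
  have hi2 : 0 < σ₂⁻¹ := inv_pos.mpr hσ₂0
  have e1 : σ₂⁻¹ * σ₁ ≤ 2 := by rw [inv_mul_le_iff₀ hσ₂0]; linarith
  have e2 : σ₂ * σ₁⁻¹ ≤ 2 := by rw [mul_inv_le_iff₀ hσ₁0]; linarith
  have e3 : σ₁⁻¹ ≤ 1 := by rw [inv_le_one_iff₀]; right; linarith
  have e4 : σ₂⁻¹ ≤ 1 := by rw [inv_le_one_iff₀]; right; linarith
  have e5 : σ₂ * (σ₁^2)⁻¹ * σ₁ = σ₂ * σ₁⁻¹ := by field_simp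
  have t1 : (σ₂⁻¹ * a * σ₁)^2 ≤ 4 := by
    have h1 : σ₂⁻¹ * a * σ₁ ≤ σ₂⁻¹ * 1 * σ₁ := by
      have := mul_le_mul_of_nonneg_left ha (le_of_lt hi2)
      exact mul_le_mul_of_nonneg_right this (le_of_lt hσ₁0)
    have h0 : 0 ≤ σ₂⁻¹ * a * σ₁ := by positivity
    nlinarith
  have t2 : (σ₂⁻¹ * b * σ₁⁻¹)^2 ≤ 1 := by
    have h1 : σ₂⁻¹ * b * σ₁⁻¹ ≤ 1 * 1 * 1 := by
      apply mul_le_mul (mul_le_mul e4 hb hb0 (by norm_num)) e3 (le_of_lt hi1)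
      norm_num
    have h0 : 0 ≤ σ₂⁻¹ * b * σ₁⁻¹ := by positivity
    nlinarith
  have t3 : (σ₂ * c * σ₁)^2 ≤ 4 := by
    have h1 : σ₂ * c * σ₁ ≤ σ₂ * (σ₁^2)⁻¹ * σ₁ := by
      have := mul_le_mul_of_nonneg_left hc (le_of_lt hσ₂0)
      exact mul_le_mul_of_nonneg_right this (le_of_lt hσ₁0)
    rw [e5] at h1
    have h0 : 0 ≤ σ₂ * c * σ₁ := by positivity
    nlinarith
  have t4 : (σ₂ * d * σ₁⁻¹)^2 ≤ 4 := by
    have h1 : σ₂ * d * σ₁⁻¹ ≤ σ₂ * 1 * σ₁⁻¹ := by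
      have := mul_le_mul_of_nonneg_left hd (le_of_lt hσ₂0)
      exact mul_le_mul_of_nonneg_right this (le_of_lt hi1)
    have h0 : 0 ≤ σ₂ * d * σ₁⁻¹ := by positivity
    nlinarith
  linarith

lemma aux_main (σ₁ σ₂ : ℝ) (U₁ V₁ U₂ V₂ g₁ g₂ : M2)
    (hσ₁ : 1 ≤ σ₁) (hσ₂ : 1 ≤ σ₂) (h12 : σ₁ ≤ 2*σ₂) (h21 : σ₂ ≤ 2*σ₁)
    (hU₁ : U₁ ∈ Matrix.unitaryGroup (Fin 2) ℂ) (hV₁ : V₁ ∈ Matrix.unitaryGroup (Fin 2) ℂ)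
    (hU₂ : U₂ ∈ Matrix.unitaryGroup (Fin 2) ℂ) (hV₂ : V₂ ∈ Matrix.unitaryGroup (Fin 2) ℂ)
    (hdU₂ : U₂.det = 1)
    (hg₁ : g₁ = U₁ * Matrix.diagonal ![((σ₁:ℝ):ℂ), ((σ₁⁻¹:ℝ):ℂ)] * V₁)
    (hg₂ : g₂ = U₂ * Matrix.diagonal ![((σ₂:ℝ):ℂ), ((σ₂⁻¹:ℝ):ℂ)] * V₂)
    (hdet₂ : g₂.det = 1)
    (hc : ‖(Matrix.adjugate U₂ * U₁) 1 0‖ ≤ (σ₁^2)⁻¹) :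
    opn (Matrix.adjugate g₂ * g₁) ≤ Real.sqrt 5 + Real.sqrt 8 := by
  have hσ₁0 : (0:ℝ) < σ₁ := by linarith
  have hσ₂0 : (0:ℝ) < σ₂ := by linarith
  have hU₂inv : U₂⁻¹ = star U₂ := Matrix.inv_eq_right_inv (Matrix.mem_unitaryGroup_iff.mp hU₂)
  have hV₂inv : V₂⁻¹ = star V₂ := Matrix.inv_eq_right_inv (Matrix.mem_unitaryGroup_iff.mp hV₂)
  have hstarU₂ : star U₂ = Matrix.adjugate U₂ := by
    rw [← hU₂inv, Matrix.inv_def, hdU₂]; simp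
  set W := Matrix.adjugate U₂ * U₁ with hW
  have hWu : W ∈ Matrix.unitaryGroup (Fin 2) ℂ := by
    rw [hW, ← hstarU₂]
    exact mul_mem (Unitary.star_mem hU₂) hU₁
  set D₁ := Matrix.diagonal ![((σ₁:ℝ):ℂ), ((σ₁⁻¹:ℝ):ℂ)] with hD₁
  set D₂' := Matrix.diagonal ![((σ₂⁻¹:ℝ):ℂ), ((σ₂:ℝ):ℂ)] with hD₂'
  set M := D₂' * W * D₁ with hM
  have hfact : Matrix.adjugate g₂ * g₁ = star V₂ * (M * V₁) := by
    have h1 : Matrix.adjugate g₂ = g₂⁻¹ := by rw [Matrix.inv_def, hdet₂]; simp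
    rw [h1, hg₂, hg₁, Matrix.mul_inv_rev, Matrix.mul_inv_rev, hU₂inv, hV₂inv,
      diag_inv σ₂ hσ₂0, hM, hW, ← hstarU₂]
    simp only [Matrix.mul_assoc, hD₁, hD₂']
  rw [hfact, opn_unitary_mul (Unitary.star_mem hV₂), opn_mul_unitary hV₁]
  -- entry norms of M
  have hMe : ∀ i j, M i j = (![((σ₂⁻¹:ℝ):ℂ), ((σ₂:ℝ):ℂ)]) i * W i j * (![((σ₁:ℝ):ℂ), ((σ₁⁻¹:ℝ):ℂ)]) j := by
    intro i j
    rw [hM, hD₂', hD₁, Matrix.mul_diagonal, Matrix.diagonal_mul]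
  have habs : ∀ i j, ‖M i j‖ = ‖(![((σ₂⁻¹:ℝ):ℂ), ((σ₂:ℝ):ℂ)]) i‖ * ‖W i j‖ * ‖(![((σ₁:ℝ):ℂ), ((σ₁⁻¹:ℝ):ℂ)]) j‖ := by
    intro i j; rw [hMe, norm_mul, norm_mul]
  have hn00 : ‖M 0 0‖ = σ₂⁻¹ * ‖W 0 0‖ * σ₁ := by
    rw [habs]
    simp only [Matrix.cons_val_zero, Matrix.cons_val_one, Matrix.head_cons, Complex.norm_real]
    rw [Real.norm_of_nonneg (le_of_lt (inv_pos.mpr hσ₂0)), Real.norm_of_nonneg (le_of_lt hσ₁0)]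
  have hn01 : ‖M 0 1‖ = σ₂⁻¹ * ‖W 0 1‖ * σ₁⁻¹ := by
    rw [habs]
    simp only [Matrix.cons_val_zero, Matrix.cons_val_one, Matrix.head_cons, Complex.norm_real]
    rw [Real.norm_of_nonneg (le_of_lt (inv_pos.mpr hσ₂0)), Real.norm_of_nonneg (le_of_lt (inv_pos.mpr hσ₁0))]
  have hn10 : ‖M 1 0‖ = σ₂ * ‖W 1 0‖ * σ₁ := by
    rw [habs]
    simp only [Matrix.cons_val_zero, Matrix.cons_val_one, Matrix.head_cons, Complex.norm_real]
    rw [Real.norm_of_nonneg (le_of_lt hσ₂0), Real.norm_of_nonneg (le_of_lt hσ₁0)]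
  have hn11 : ‖M 1 1‖ = σ₂ * ‖W 1 1‖ * σ₁⁻¹ := by
    rw [habs]
    simp only [Matrix.cons_val_zero, Matrix.cons_val_one, Matrix.head_cons, Complex.norm_real]
    rw [Real.norm_of_nonneg (le_of_lt hσ₂0), Real.norm_of_nonneg (le_of_lt (inv_pos.mpr hσ₁0))]
  have ha : ‖W 0 0‖ ≤ 1 := entry_norm_bound_of_unitary hWu 0 0
  have hb : ‖W 0 1‖ ≤ 1 := entry_norm_bound_of_unitary hWu 0 1
  have hdd : ‖W 1 1‖ ≤ 1 := entry_norm_bound_of_unitary hWu 1 1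
  refine (opn_le_frob M).trans (le_trans ?_ sqrt13_le)
  apply Real.sqrt_le_sqrt
  rw [hn00, hn01, hn10, hn11]
  exact numeric σ₁ σ₂ ‖W 0 0‖ ‖W 0 1‖ ‖W 1 0‖ ‖W 1 1‖ hσ₁ hσ₂ h12 h21
    (norm_nonneg _) ha (norm_nonneg _) hb (norm_nonneg _) hc (norm_nonneg _) hdd

abbrev SL2 := Matrix.SpecialLinearGroup (Fin 2) ℂ

lemma sqrt8_le : Real.sqrt 2 * 2 ≤ Real.sqrt 5 + Real.sqrt 8 := by
  have h8 : Real.sqrt 8 = Real.sqrt 2 * 2 := by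
    rw [show (8:ℝ) = 2 * 2^2 by norm_num, Real.sqrt_mul (by norm_num),
      Real.sqrt_sq (by norm_num)]
  rw [h8]
  have := Real.sqrt_nonneg (5:ℝ)
  linarith

lemma coe_inv_mul (g₁ g₂ : SL2) :
    (↑(g₂⁻¹ * g₁) : M2) = Matrix.adjugate (↑g₂ : M2) * (↑g₁ : M2) := by
  rw [Matrix.SpecialLinearGroup.coe_mul, Matrix.SpecialLinearGroup.coe_inv]

lemma easy_case (g₁ g₂ : SL2) (h : opn ↑g₂ * opn ↑g₁ ≤ 2) :
    opn (↑(g₂⁻¹ * g₁) : M2) ≤ Real.sqrt 5 + Real.sqrt 8 := by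
  rw [coe_inv_mul]
  calc opn (Matrix.adjugate (↑g₂ : M2) * (↑g₁ : M2))
      ≤ opn (Matrix.adjugate (↑g₂ : M2)) * opn (↑g₁ : M2) := opn_mul_le _ _
  _ ≤ (Real.sqrt 2 * opn (↑g₂ : M2)) * opn (↑g₁ : M2) :=
      mul_le_mul_of_nonneg_right (opn_adjugate_le _) (opn_nonneg _)
  _ = Real.sqrt 2 * (opn (↑g₂ : M2) * opn (↑g₁ : M2)) := by ring
  _ ≤ Real.sqrt 2 * 2 :=
      mul_le_mul_of_nonneg_left h (Real.sqrt_nonneg 2)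
  _ ≤ Real.sqrt 5 + Real.sqrt 8 := sqrt8_le

lemma reprL_opn_ge_one {g : SL2} {L : C2} (h : ReprL g L) : 1 ≤ opn (↑g : M2) := by
  rcases h with ⟨h1, _⟩ | ⟨h1, _⟩
  · exact h1.ge
  · exact h1.le

lemma reprL_norm_one {U : M2} (hU : U ∈ Matrix.unitaryGroup (Fin 2) ℂ) :
    ‖mulVecE U e1‖ = 1 := by
  have : ‖Matrix.toEuclideanCLM (𝕜 := ℂ) U e1‖ = ‖e1‖ := norm_clm_unitary_apply hU e1
  rw [norm_e1] at this
  exact this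

lemma mulVecE_e1 (U : M2) (i : Fin 2) : (mulVecE U e1) i = U i 0 := by
  unfold mulVecE
  rw [clm_apply]
  simp [e1]

end Stmt7Aux

open Stmt7Aux

/-- If g₁, g₂ ∈ SL(2,ℂ) have comparable operator norms and nearby attracting directions
(d(L(g₁),L(g₂)) ≤ ‖g₁‖_op⁻²), then they lie within a bounded distance R of each other for
any continuous left-invariant distance d_G on SL(2,ℂ); concretely, ‖g₂⁻¹g₁‖_op ≤ √5 + √8. -/
theorem stmt_7 (dG : Matrix (Fin 2) (Fin 2) ℂ → Matrix (Fin 2) (Fin 2) ℂ → ℝ)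
    (hinv : ∀ h g g' : Matrix (Fin 2) (Fin 2) ℂ, h.det = 1 → dG (h * g) (h * g') = dG g g')
    (hcont : Continuous fun p : Matrix (Fin 2) (Fin 2) ℂ × Matrix (Fin 2) (Fin 2) ℂ =>
      dG p.1 p.2) :
    ∃ R : ℝ, 1 < R ∧
      ∀ (g₁ g₂ : Matrix.SpecialLinearGroup (Fin 2) ℂ) (L₁ L₂ : C2),
        ReprL g₁ L₁ → ReprL g₂ L₂ →
        (1 / 2 : ℝ) ≤ opn (↑g₁) / opn (↑g₂) → opn (↑g₁) / opn (↑g₂) ≤ 2 →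
        dCP L₁ L₂ ≤ ((opn (↑g₁)) ^ 2)⁻¹ →
        dG (↑g₁) (↑g₂) ≤ R ∧ opn (↑(g₂⁻¹ * g₁)) ≤ Real.sqrt 5 + Real.sqrt 8 := by
  classical
  set F : (Fin 2 → Fin 2 → ℂ) → ℝ := fun m => dG (Matrix.of m) 1 with hF
  have hFc : Continuous F :=
    hcont.comp (Continuous.prodMk continuous_id continuous_const)
  obtain ⟨m₀, hm₀mem, hm₀'⟩ :=
    (isCompact_closedBall (0 : Fin 2 → Fin 2 → ℂ) 6).exists_isMaxOn
      ⟨0, Metric.mem_closedBall_self (by norm_num)⟩ hFc.continuousOn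
  have hm₀ : ∀ y ∈ Metric.closedBall (0 : Fin 2 → Fin 2 → ℂ) 6, F y ≤ F m₀ := fun y hy => hm₀' hy
  refine ⟨max (F m₀) 0 + 2, by have := le_max_right (F m₀) 0; linarith, ?_⟩
  intro g₁ g₂ L₁ L₂ h₁ h₂ hr1 hr2 hd
  have hσ₁ : 1 ≤ opn (↑g₁ : M2) := reprL_opn_ge_one h₁
  have hσ₂ : 1 ≤ opn (↑g₂ : M2) := reprL_opn_ge_one h₂
  have hσ₂0 : (0:ℝ) < opn (↑g₂ : M2) := by linarith
  have h12 : opn (↑g₁ : M2) ≤ 2 * opn (↑g₂ : M2) := by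
    rw [div_le_iff₀ hσ₂0] at hr2; linarith
  have h21 : opn (↑g₂ : M2) ≤ 2 * opn (↑g₁ : M2) := by
    rw [le_div_iff₀ hσ₂0] at hr1; linarith
  have key : opn (↑(g₂⁻¹ * g₁) : M2) ≤ Real.sqrt 5 + Real.sqrt 8 := by
    rcases h₂ with ⟨h2eq, _⟩ | ⟨h2lt, U₂, V₂, hU₂, hV₂, hg₂, hL₂⟩
    · exact easy_case g₁ g₂ (by rw [h2eq]; linarith)
    rcases h₁ with ⟨h1eq, hL₁e⟩ | ⟨h1lt, U₁, V₁, hU₁, hV₁, hg₁, hL₁⟩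
    · exact easy_case g₁ g₂ (by rw [h1eq] at h21 ⊢; linarith)
    obtain ⟨hU₁u, hU₁d⟩ := Matrix.mem_specialUnitaryGroup_iff.mp hU₁
    obtain ⟨hV₁u, _⟩ := Matrix.mem_specialUnitaryGroup_iff.mp hV₁
    obtain ⟨hU₂u, hU₂d⟩ := Matrix.mem_specialUnitaryGroup_iff.mp hU₂
    obtain ⟨hV₂u, _⟩ := Matrix.mem_specialUnitaryGroup_iff.mp hV₂
    have hL1i : ∀ i, L₁ i = U₁ i 0 := by intro i; rw [hL₁, mulVecE_e1]
    have hL2i : ∀ i, L₂ i = U₂ i 0 := by intro i; rw [hL₂, mulVecE_e1]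
    have hn1 : ‖L₁‖ = 1 := by rw [hL₁]; exact reprL_norm_one hU₁u
    have hn2 : ‖L₂‖ = 1 := by rw [hL₂]; exact reprL_norm_one hU₂u
    have hent : (Matrix.adjugate U₂ * U₁) 1 0 = -(L₁ 0 * L₂ 1 - L₁ 1 * L₂ 0) := by
      rw [Matrix.adjugate_fin_two, Matrix.mul_apply, Fin.sum_univ_two,
        hL1i 0, hL1i 1, hL2i 0, hL2i 1]
      simp
      ring
    have hcbound : ‖(Matrix.adjugate U₂ * U₁) 1 0‖ ≤ ((opn (↑g₁ : M2))^2)⁻¹ := by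
      rw [hent, norm_neg]
      have hdcp : dCP L₁ L₂ = ‖L₁ 0 * L₂ 1 - L₁ 1 * L₂ 0‖ := by
        unfold dCP
        rw [hn1, hn2]
        norm_num
      rw [← hdcp]
      exact hd
    rw [coe_inv_mul]
    exact aux_main (opn (↑g₁ : M2)) (opn (↑g₂ : M2)) U₁ V₁ U₂ V₂ (↑g₁) (↑g₂) hσ₁ hσ₂ h12 h21
      hU₁u hV₁u hU₂u hV₂u hU₂d hg₁ hg₂ g₂.prop hcbound
  refine ⟨?_, key⟩
  set x : M2 := (↑(g₂⁻¹ * g₁) : M2) with hxdef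
  have h6 : Real.sqrt 5 + Real.sqrt 8 ≤ 6 := by
    have h9 : Real.sqrt 9 = 3 := by
      rw [show (9:ℝ) = 3^2 by norm_num, Real.sqrt_sq (by norm_num)]
    have h5 : Real.sqrt 5 ≤ 3 := by rw [← h9]; exact Real.sqrt_le_sqrt (by norm_num)
    have h8 : Real.sqrt 8 ≤ 3 := by rw [← h9]; exact Real.sqrt_le_sqrt (by norm_num)
    linarith
  have hmem : (fun i j => x i j) ∈ Metric.closedBall (0 : Fin 2 → Fin 2 → ℂ) 6 := by
    rw [Metric.mem_closedBall, dist_zero_right]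
    refine (pi_norm_le_iff_of_nonneg (by norm_num)).mpr fun i => ?_
    refine (pi_norm_le_iff_of_nonneg (by norm_num)).mpr fun j => ?_
    exact (entry_le_opn x i j).trans (key.trans h6)
  have hgood : dG (↑g₁) (↑g₂) = F (fun i j => x i j) := by
    have h1 : dG ((↑g₂ : M2) * x) ((↑g₂ : M2) * 1) = dG x 1 := hinv _ _ _ g₂.prop
    have h2 : (↑g₂ : M2) * x = (↑g₁ : M2) := by
      rw [hxdef, ← Matrix.SpecialLinearGroup.coe_mul, mul_inv_cancel_left]
    rw [h2, mul_one] at h1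
    have h3 : F (fun i j => x i j) = dG x 1 := rfl
    rw [h3, ← h1]
  rw [hgood]
  have ha := hm₀ _ hmem
  have hb := le_max_left (F m₀) 0
  linarith
end
end
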